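/- A non-Weierstrassian theta-constant parametrization of the elliptic curve y² = x³ + x (isomorphic to the lemniscate): for every τ ∈ ℂ with Im τ > 0, setting x = ϑ₃(4τ)/ϑ₂(4τ) and y = ϑ₂(τ)²/(2√2·ϑ₂(4τ)²), one has y² = x³ + x. -/

import Mathlib

open Complex

/-- Jacobi theta-constant ϑ₂. -/
noncomputable def θ₂ (τ : ℂ) : ℂ :=
  Complex.exp ((Real.pi : ℂ) * Complex.I * τ / 4) * jacobiTheta₂ (τ / 2) τ

/-- Jacobi theta-constant ϑ₃. -/
noncomputable def θ₃ (τ : ℂ) : ℂ := jacobiTheta₂ 0 τ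

/-- Jacobi theta-constant ϑ₄. -/
noncomputable def θ₄ (τ : ℂ) : ℂ := jacobiTheta₂ (1 / 2) τ

/-- Dedekind eta function. -/
noncomputable def dedekindEta (τ : ℂ) : ℂ :=
  Complex.exp ((Real.pi : ℂ) * Complex.I * τ / 12) *
    ∏' k : ℕ, (1 - Complex.exp (2 * (Real.pi : ℂ) * Complex.I * ((k : ℂ) + 1) * τ))

/-- Schwarzian derivative {f, τ}. -/
noncomputable def schwarzian (f : ℂ → ℂ) (τ : ℂ) : ℂ :=
  deriv (deriv (deriv f)) τ / deriv f τ - (3 / 2) * (deriv (deriv f) τ / deriv f τ) ^ 2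

/-! ### Auxiliary series lemmas -/

/-- The `n`-th term of the series for `θ₃`. -/
noncomputable def T3 (τ : ℂ) (n : ℤ) : ℂ := Complex.exp ((Real.pi:ℂ) * I * τ * (n:ℂ) ^ 2)
/-- The `n`-th term of the series for `θ₂`. -/
noncomputable def T2 (τ : ℂ) (n : ℤ) : ℂ := Complex.exp ((Real.pi:ℂ) * I * τ * ((n:ℂ) + 1/2) ^ 2)

lemma hasSum_congr' {ι : Type*} {f g : ι → ℂ} {a : ℂ} (hf : HasSum f a) (h : ∀ i, f i = g i) :
    HasSum g a := by rwa [funext h] at hf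

lemma summable_norm_jacobi (z : ℂ) {τ : ℂ} (hτ : 0 < τ.im) :
    Summable fun n : ℤ => ‖jacobiTheta₂_term n z τ‖ := by
  have h := summable_pow_mul_jacobiTheta₂_term_bound |z.im| hτ 0
  simp only [pow_zero, one_mul] at h
  exact h.of_nonneg_of_le (fun n => norm_nonneg _)
    (fun n => norm_jacobiTheta₂_term_le hτ le_rfl le_rfl n)

lemma T3_eq (τ : ℂ) (n : ℤ) : jacobiTheta₂_term n 0 τ = T3 τ n := by
  rw [jacobiTheta₂_term, T3]; congr 1; ring

lemma T2_eq (τ : ℂ) (n : ℤ) :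
    Complex.exp ((Real.pi:ℂ) * I * τ / 4) * jacobiTheta₂_term n (τ/2) τ = T2 τ n := by
  rw [jacobiTheta₂_term, T2, ← Complex.exp_add]; congr 1; ring

lemma hasSum_T3 {τ : ℂ} (hτ : 0 < τ.im) : HasSum (T3 τ) (θ₃ τ) :=
  hasSum_congr' (hasSum_jacobiTheta₂_term 0 hτ) (T3_eq τ)

lemma hasSum_T2 {τ : ℂ} (hτ : 0 < τ.im) : HasSum (T2 τ) (θ₂ τ) :=
  hasSum_congr' ((hasSum_jacobiTheta₂_term (τ/2) hτ).mul_left _) (T2_eq τ)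

lemma summable_norm_T3 {τ : ℂ} (hτ : 0 < τ.im) : Summable fun n : ℤ => ‖T3 τ n‖ :=
  (summable_norm_jacobi 0 hτ).congr fun n => by rw [T3_eq]

lemma summable_norm_T2 {τ : ℂ} (hτ : 0 < τ.im) : Summable fun n : ℤ => ‖T2 τ n‖ :=
  ((summable_norm_jacobi (τ/2) hτ).mul_left ‖Complex.exp ((Real.pi:ℂ) * I * τ / 4)‖).congr
    fun n => by rw [← norm_mul, T2_eq]

/-- Pairs of integers whose difference is even. -/
def evenSet : Set (ℤ × ℤ) := {p | (p.1 - p.2) % 2 = 0}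

def eEven : ℤ × ℤ ≃ evenSet where
  toFun p := ⟨(p.1 + p.2, p.1 - p.2), by simp only [evenSet, Set.mem_setOf_eq]; omega⟩
  invFun q := ((q.1.1 + q.1.2) / 2, (q.1.1 - q.1.2) / 2)
  left_inv p := by obtain ⟨a, b⟩ := p; simp only [Prod.mk.injEq]; omega
  right_inv q := by
    obtain ⟨⟨n, m⟩, h⟩ := q
    simp only [evenSet, Set.mem_setOf_eq] at h
    apply Subtype.ext
    simp only [Prod.mk.injEq]
    omega

def eOddA : ℤ × ℤ ≃ ↥(evenSetᶜ) where
  toFun p := ⟨(p.1 + p.2, p.1 - p.2 - 1), by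
    simp only [evenSet, Set.mem_compl_iff, Set.mem_setOf_eq]; omega⟩
  invFun q := ((q.1.1 + q.1.2 + 1) / 2, (q.1.1 - q.1.2 - 1) / 2)
  left_inv p := by obtain ⟨a, b⟩ := p; simp only [Prod.mk.injEq]; omega
  right_inv q := by
    obtain ⟨⟨n, m⟩, h⟩ := q
    simp only [evenSet, Set.mem_compl_iff, Set.mem_setOf_eq] at h
    apply Subtype.ext
    simp only [Prod.mk.injEq]
    omega

def eOddB : ℤ × ℤ ≃ ↥(evenSetᶜ) where
  toFun p := ⟨(p.1 + p.2 + 1, p.1 - p.2), by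
    simp only [evenSet, Set.mem_compl_iff, Set.mem_setOf_eq]; omega⟩
  invFun q := ((q.1.1 + q.1.2 - 1) / 2, (q.1.1 - q.1.2 - 1) / 2)
  left_inv p := by obtain ⟨a, b⟩ := p; simp only [Prod.mk.injEq]; omega
  right_inv q := by
    obtain ⟨⟨n, m⟩, h⟩ := q
    simp only [evenSet, Set.mem_compl_iff, Set.mem_setOf_eq] at h
    apply Subtype.ext
    simp only [Prod.mk.injEq]
    omega

lemma im_two_mul {τ : ℂ} (hτ : 0 < τ.im) : 0 < (2 * τ).im := by
  rw [Complex.mul_im]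
  simp
  linarith

/-- Doubling identity: `θ₂ τ ^ 2 = 2 θ₂(2τ) θ₃(2τ)`. -/
lemma theta2_sq {τ : ℂ} (hτ : 0 < τ.im) : θ₂ τ ^ 2 = 2 * θ₂ (2*τ) * θ₃ (2*τ) := by
  have him := im_two_mul hτ
  have h2 := hasSum_T2 hτ
  have h2u := hasSum_T2 him
  have h3u := hasSum_T3 him
  have hprod : HasSum (fun p : ℤ × ℤ => T2 τ p.1 * T2 τ p.2) (θ₂ τ * θ₂ τ) :=
    h2.mul h2 (summable_mul_of_summable_norm (summable_norm_T2 hτ) (summable_norm_T2 hτ))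
  have heven : HasSum ((fun p : ℤ × ℤ => T2 τ p.1 * T2 τ p.2) ∘ ((↑) : evenSet → ℤ × ℤ))
      (θ₂ (2*τ) * θ₃ (2*τ)) := by
    refine eEven.hasSum_iff.mp (hasSum_congr' (h2u.mul h3u
      (summable_mul_of_summable_norm (summable_norm_T2 him) (summable_norm_T3 him))) ?_)
    rintro ⟨a, b⟩
    show T2 (2*τ) a * T3 (2*τ) b = T2 τ (a + b) * T2 τ (a - b)
    rw [T2, T2, T2, T3, ← Complex.exp_add, ← Complex.exp_add]
    congr 1
    push_cast
    ring
  have hodd : HasSum ((fun p : ℤ × ℤ => T2 τ p.1 * T2 τ p.2) ∘ ((↑) : ↥(evenSetᶜ) → ℤ × ℤ))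
      (θ₃ (2*τ) * θ₂ (2*τ)) := by
    refine eOddA.hasSum_iff.mp (hasSum_congr' (h3u.mul h2u
      (summable_mul_of_summable_norm (summable_norm_T3 him) (summable_norm_T2 him))) ?_)
    rintro ⟨a, b⟩
    show T3 (2*τ) a * T2 (2*τ) b = T2 τ (a + b) * T2 τ (a - b - 1)
    rw [T2, T2, T2, T3, ← Complex.exp_add, ← Complex.exp_add]
    congr 1
    push_cast
    ring
  have := hprod.unique (heven.add_compl hodd)
  linear_combination this

/-- Doubling identity: `θ₃ τ ^ 2 = θ₃(2τ)² + θ₂(2τ)²`. -/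
lemma theta3_sq {τ : ℂ} (hτ : 0 < τ.im) : θ₃ τ ^ 2 = θ₃ (2*τ) ^ 2 + θ₂ (2*τ) ^ 2 := by
  have him := im_two_mul hτ
  have h3 := hasSum_T3 hτ
  have h2u := hasSum_T2 him
  have h3u := hasSum_T3 him
  have hprod : HasSum (fun p : ℤ × ℤ => T3 τ p.1 * T3 τ p.2) (θ₃ τ * θ₃ τ) :=
    h3.mul h3 (summable_mul_of_summable_norm (summable_norm_T3 hτ) (summable_norm_T3 hτ))
  have heven : HasSum ((fun p : ℤ × ℤ => T3 τ p.1 * T3 τ p.2) ∘ ((↑) : evenSet → ℤ × ℤ))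
      (θ₃ (2*τ) * θ₃ (2*τ)) := by
    refine eEven.hasSum_iff.mp (hasSum_congr' (h3u.mul h3u
      (summable_mul_of_summable_norm (summable_norm_T3 him) (summable_norm_T3 him))) ?_)
    rintro ⟨a, b⟩
    show T3 (2*τ) a * T3 (2*τ) b = T3 τ (a + b) * T3 τ (a - b)
    rw [T3, T3, T3, T3, ← Complex.exp_add, ← Complex.exp_add]
    congr 1
    push_cast
    ring
  have hodd : HasSum ((fun p : ℤ × ℤ => T3 τ p.1 * T3 τ p.2) ∘ ((↑) : ↥(evenSetᶜ) → ℤ × ℤ))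
      (θ₂ (2*τ) * θ₂ (2*τ)) := by
    refine eOddB.hasSum_iff.mp (hasSum_congr' (h2u.mul h2u
      (summable_mul_of_summable_norm (summable_norm_T2 him) (summable_norm_T2 him))) ?_)
    rintro ⟨a, b⟩
    show T2 (2*τ) a * T2 (2*τ) b = T3 τ (a + b + 1) * T3 τ (a - b)
    rw [T2, T2, T3, T3, ← Complex.exp_add, ← Complex.exp_add]
    congr 1
    push_cast
    ring
  have := hprod.unique (heven.add_compl hodd)
  linear_combination this

/-- Non-Weierstrassian parametrization of y² = x³ + x:
x = ϑ₃(4τ)/ϑ₂(4τ), y = ϑ₂(τ)²/(2√2·ϑ₂(4τ)²). -/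
theorem lemniscate_parametrization (τ : ℂ) (hτ : 0 < τ.im) :
    (θ₂ τ ^ 2 / (2 * (Real.sqrt 2 : ℂ) * θ₂ (4 * τ) ^ 2)) ^ 2 =
      (θ₃ (4 * τ) / θ₂ (4 * τ)) ^ 3 + θ₃ (4 * τ) / θ₂ (4 * τ) := by
  by_cases h0 : θ₂ (4 * τ) = 0
  · simp [h0]
  · have him := im_two_mul hτ
    have h1 := theta2_sq hτ
    have h2 := theta2_sq him
    have h3 := theta3_sq him
    rw [show (2:ℂ) * (2 * τ) = 4 * τ by ring] at h2 h3
    have key : θ₂ τ ^ 4 = 8 * θ₂ (4*τ) * θ₃ (4*τ) * (θ₃ (4*τ)^2 + θ₂ (4*τ)^2) := by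
      linear_combination (θ₂ τ^2 + 2*θ₂ (2*τ)*θ₃ (2*τ))*h1 + 4*θ₃ (2*τ)^2*h2
        + 8*θ₂ (4*τ)*θ₃ (4*τ)*h3
    have hs : ((Real.sqrt 2 : ℝ) : ℂ) ^ 2 = 2 := by
      norm_cast
      rw [Real.sq_sqrt]
      norm_num
    have hsn : ((Real.sqrt 2 : ℝ) : ℂ) ≠ 0 := by
      simp only [ne_eq, Complex.ofReal_eq_zero]
      positivity
    field_simp
    linear_combination key -
      4 * θ₂ (4*τ) * θ₃ (4*τ) * (θ₃ (4*τ)^2 + θ₂ (4*τ)^2) * hs
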